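/- Let n = 4 and let w, v ∈ D_4 be the even signed permutations with one-line notations [1, 4, −2, −3] and [4, −1, 2, −3] respectively. Then: (a) the Demazure product in the Coxeter group D_4 is w ⋆ v = [−2, −1, 4, 3]; (b) regarding w and v as elements of the symmetric group on the 8-element linearly ordered set ±[4] (a Coxeter group of type A_7 whose simple generators are the transpositions of order-adjacent elements of ±[4]), their Demazure product in that symmetric group is the bijection u of ±[4] with u(1) = −2, u(2) = −1, u(3) = 4, u(4) = −3 (and u(−a) = −u(a)); (c) u is a signed permutation that is not even (exactly three of u(1), u(2), u(3), u(4) are negative), so u ∉ D_4 and u ≠ w ⋆ v. Hence the type-B identity expressing the Demazure product of folded elements as the fold of the Demazure product of their unfoldings fails in type D. -/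

import Mathlib

open Equiv

/-- The key of `a : ℤ` in the total order `1 < 2 < ⋯ < n < -n < ⋯ < -2 < -1` on `±[n]`:
elements of `±[n]` get the keys `1, …, 2n` (in order); anything else gets key `2n+1`. -/
def dkey (n : ℕ) (a : ℤ) : ℤ :=
  if 1 ≤ a ∧ a ≤ (n : ℤ) then a
  else if -(n : ℤ) ≤ a ∧ a ≤ -1 then 2 * n + 1 + a
  else 2 * n + 1

/-- `a < b` in the total order `1 < 2 < ⋯ < n < -n < ⋯ < -2 < -1` on `±[n]`. -/
def dlt (n : ℕ) (a b : ℤ) : Prop := dkey n a < dkey n b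

instance (n : ℕ) (a b : ℤ) : Decidable (dlt n a b) :=
  inferInstanceAs (Decidable (dkey n a < dkey n b))

/-- `a` is an element of `±[n] = {1,…,n} ∪ {-1,…,-n}`. -/
def inPM (n : ℕ) (a : ℤ) : Prop := a ≠ 0 ∧ |a| ≤ (n : ℤ)

instance (n : ℕ) (a : ℤ) : Decidable (inPM n a) :=
  inferInstanceAs (Decidable (a ≠ 0 ∧ |a| ≤ (n : ℤ)))

/-- The element of `±[n]` whose key is `k` (for `1 ≤ k ≤ 2n`). -/
def ofKey (n : ℕ) (k : ℤ) : ℤ := if k ≤ (n : ℤ) then k else k - (2 * n + 1)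

/-- A signed permutation of `±[n]`, viewed as a permutation of `ℤ`:
it commutes with negation and fixes everything outside `±[n]`. -/
def IsSignedPerm (n : ℕ) (w : Perm ℤ) : Prop :=
  (∀ a : ℤ, w (-a) = -(w a)) ∧ ∀ a : ℤ, (n : ℤ) < |a| → w a = a

/-- An even signed permutation of `±[n]`, i.e. an element of the group `D_n`. -/
def IsEvenSignedPerm (n : ℕ) (w : Perm ℤ) : Prop :=
  IsSignedPerm n w ∧ Even ((Finset.Icc (1 : ℤ) (n : ℤ)).filter fun i => w i < 0).card

/-- The simple generators `s_1, …, s_n` of `D_n`:  for `1 ≤ i ≤ n-1`, `s_i` exchanges the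
values `i ↔ i+1` and `-i ↔ -(i+1)`;  `s_n` exchanges the values `n-1 ↔ -n` and `n ↔ -(n-1)`. -/
def sgen (n i : ℕ) : Perm ℤ :=
  if i = n then Equiv.swap ((n : ℤ) - 1) (-(n : ℤ)) * Equiv.swap (n : ℤ) (-((n : ℤ) - 1))
  else Equiv.swap (i : ℤ) ((i : ℤ) + 1) * Equiv.swap (-(i : ℤ)) (-((i : ℤ) + 1))

/-- The product `s_{l₁} s_{l₂} ⋯ s_{l_k}` of the word `l = [l₁, …, l_k]`. -/
def wordProd (n : ℕ) (l : List ℕ) : Perm ℤ := (l.map (sgen n)).prod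

/-- The Coxeter length of `w ∈ D_n`: the least length of a word in `s_1, …, s_n` whose
product is `w`. -/
noncomputable def DLength (n : ℕ) (w : Perm ℤ) : ℕ :=
  sInf {k | ∃ l : List ℕ, (∀ i ∈ l, 1 ≤ i ∧ i ≤ n) ∧ l.length = k ∧ wordProd n l = w}

/-- `dem` is the Demazure product of the Coxeter group `D_n`: the (unique) associative
product on `D_n`, with identity `id`, such that for each simple generator `s` and `u ∈ D_n`,
`s ⋆ u = s·u` if `ℓ(s·u) > ℓ(u)`, and `s ⋆ u = u` if `ℓ(s·u) < ℓ(u)`. -/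
def IsDemazure (n : ℕ) (dem : Perm ℤ → Perm ℤ → Perm ℤ) : Prop :=
  (∀ u v, IsEvenSignedPerm n u → IsEvenSignedPerm n v → IsEvenSignedPerm n (dem u v)) ∧
  (∀ u v w, IsEvenSignedPerm n u → IsEvenSignedPerm n v → IsEvenSignedPerm n w →
      dem (dem u v) w = dem u (dem v w)) ∧
  (∀ u, IsEvenSignedPerm n u → dem 1 u = u ∧ dem u 1 = u) ∧
  (∀ i, 1 ≤ i → i ≤ n → ∀ u, IsEvenSignedPerm n u →
      (DLength n u < DLength n (sgen n i * u) → dem (sgen n i) u = sgen n i * u) ∧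
      (DLength n (sgen n i * u) < DLength n u → dem (sgen n i) u = u))

/-- The swap performed in one step of the hopping procedure: exchange the values `t ↔ q`
and simultaneously `-t ↔ -q` (unless `t = -q`). -/
def hswap (t q : ℤ) : Perm ℤ :=
  if t = -q then Equiv.swap t q else Equiv.swap t q * Equiv.swap (-t) (-q)

/-- `q` is eligible for hopping `t` in `w`: `q ∈ ±[n]`, `q > t` in the order on `±[n]`,
and `q` occurs strictly to the right of `t` in the unfolding of `w`. -/
def HopStep (n : ℕ) (w : Perm ℤ) (t q : ℤ) : Prop :=
  inPM n q ∧ dlt n t q ∧ dkey n (w⁻¹ t) < dkey n (w⁻¹ q) ∧ dkey n (w⁻¹ q) ≤ 2 * n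

instance (n : ℕ) (w : Perm ℤ) (t q : ℤ) : Decidable (HopStep n w t q) :=
  inferInstanceAs (Decidable
    (inPM n q ∧ dlt n t q ∧ dkey n (w⁻¹ t) < dkey n (w⁻¹ q) ∧ dkey n (w⁻¹ q) ≤ 2 * n))

theorem hop_measure (n : ℕ) (w : Perm ℤ) (t q : ℤ) (h : HopStep n w t q) :
    (2 * (n : ℤ) + 1 - dkey n ((hswap t q * w)⁻¹ t)).toNat
      < (2 * (n : ℤ) + 1 - dkey n (w⁻¹ t)).toNat := by
  obtain ⟨⟨hq0, _⟩, _, hlt, hle⟩ := h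
  have key : (hswap t q * w)⁻¹ t = w⁻¹ q := by
    have hs : (hswap t q)⁻¹ t = q := by
      unfold hswap
      split_ifs with he
      · subst he
        simp [Equiv.swap_inv, Equiv.swap_apply_left]
      · have h1 : q ≠ -t := fun hc => he (by omega)
        have h2 : q ≠ -q := fun hc => hq0 (by omega)
        simp [mul_inv_rev, Equiv.swap_inv, Equiv.Perm.mul_apply, Equiv.swap_apply_left,
          Equiv.swap_apply_of_ne_of_ne h1 h2]
    rw [mul_inv_rev, Equiv.Perm.mul_apply, hs]
  rw [key]
  omega

/-- The hopping operator `h_{t,L}`: repeatedly pick the element `q` of `L`, occurring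
latest in `L`, among those greater than `t` occurring strictly to the right of `t` in
the unfolding of `w`; swap the values `t ↔ q` (and `-t ↔ -q`, unless `t = -q`); stop
when no such `q` exists. -/
def hop (n : ℕ) (t : ℤ) (L : List ℤ) (w : Perm ℤ) : Perm ℤ :=
  match h : L.reverse.find? (fun q => decide (HopStep n w t q)) with
  | none => w
  | some q => hop n t L (hswap t q * w)
termination_by (2 * (n : ℤ) + 1 - dkey n (w⁻¹ t)).toNat
decreasing_by
  have hq := List.find?_some h
  simp only [decide_eq_true_eq] at hq
  exact hop_measure n w t q hq

/-- The unfolding `[w(1), …, w(n), -w(n), …, -w(1)]` of a signed permutation `w`. -/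
def unfoldList (n : ℕ) (w : Perm ℤ) : List ℤ :=
  (List.range (2 * n)).map fun p => w (ofKey n ((p : ℤ) + 1))

/-- `w ↖ t`: the ordered list of entries of the unfolding of `w` occurring strictly to the
left of the value `t` and lying strictly between `t` and `-t` in the order on `±[n]`. -/
def liftD (n : ℕ) (w : Perm ℤ) (t : ℤ) : List ℤ :=
  ((unfoldList n w).take (dkey n (w⁻¹ t) - 1).toNat).filter
    fun a => decide (dlt n t a ∧ dlt n a (-t))

/-- `L ∼ₜ L'` : the hopping operators `h_{t,L}` and `h_{t,L'}` agree on all of `D_n`. -/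
def HopEquiv (n : ℕ) (t : ℤ) (L L' : List ℤ) : Prop :=
  ∀ u : Perm ℤ, IsEvenSignedPerm n u → hop n t L u = hop n t L' u

/-- The list `[a, a+1, …, b]` (as integers). -/
def listUp (a b : ℕ) : List ℤ := (List.range (b + 1 - a)).map fun k => (a : ℤ) + k

/-- The list `[-b, -(b-1), …, -a]` (as integers). -/
def listNegUp (a b : ℕ) : List ℤ := (List.range (b + 1 - a)).map fun k => -(b : ℤ) + k

/-- For `1 ≤ i ≤ n-2` : `Q` is one of the minimal coset representatives
(form 0: `id`; form 1: `s_i ⋯ s_j`; form 2: `s_i ⋯ s_{n-2} s_n s_{n-1} ⋯ s_j`;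
form 3: `s_i ⋯ s_{n-2} s_n`). -/
def QForm (n i : ℕ) (Q : Perm ℤ) : Prop :=
  Q = 1 ∨
  (∃ j, i ≤ j ∧ j ≤ n - 1 ∧ Q = wordProd n (List.range' i (j + 1 - i))) ∨
  (∃ j, i ≤ j ∧ j ≤ n - 1 ∧
    Q = wordProd n (List.range' i (n - 1 - i) ++ [n] ++ (List.range' j (n - j)).reverse)) ∨
  Q = wordProd n (List.range' i (n - 1 - i) ++ [n])

/-- `Q` is one of the four elements `id`, `s_{n-1}`, `s_n s_{n-1}`, `s_n` of
`W_{{s_{n-1}, s_n}}`. -/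
def QFormTop (n : ℕ) (Q : Perm ℤ) : Prop :=
  Q = 1 ∨ Q = sgen n (n - 1) ∨ Q = sgen n n * sgen n (n - 1) ∨ Q = sgen n n

/-- For `1 ≤ i ≤ n-2`: `(Q, L)` is a factor of a parabolic factorization together with
its associated list `L_i`. -/
def QList (n i : ℕ) (Q : Perm ℤ) (L : List ℤ) : Prop :=
  (Q = 1 ∧ L = []) ∨
  (∃ j, i ≤ j ∧ j ≤ n - 1 ∧ Q = wordProd n (List.range' i (j + 1 - i)) ∧
    L = listUp (i + 1) (j + 1)) ∨
  (∃ j, i ≤ j ∧ j ≤ n - 1 ∧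
    Q = wordProd n (List.range' i (n - 1 - i) ++ [n] ++ (List.range' j (n - j)).reverse) ∧
    L = listUp (i + 1) n ++ listNegUp (j + 1) n) ∨
  (Q = wordProd n (List.range' i (n - 1 - i) ++ [n]) ∧
    L = listUp (i + 1) (n - 1) ++ [-(n : ℤ)])

/-- `(Q, L)` is the top factor `Q_{n-1}` of a parabolic factorization together with its
associated list `L_{n-1}`. -/
def QListTop (n : ℕ) (Q : Perm ℤ) (L : List ℤ) : Prop :=
  (Q = 1 ∧ L = []) ∨ (Q = sgen n (n - 1) ∧ L = [(n : ℤ)]) ∨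
  (Q = sgen n n * sgen n (n - 1) ∧ L = [(n : ℤ), -(n : ℤ)]) ∨
  (Q = sgen n n ∧ L = [-(n : ℤ)])

/-- The partial product `Q_{n-1} Q_{n-2} ⋯ Q_k` of a parabolic factorization. -/
def prodQ (n : ℕ) (Q : ℕ → Perm ℤ) (k : ℕ) : Perm ℤ :=
  (((List.range' k (n - k)).reverse).map Q).prod

/-- The letterwise extended Demazure action of the generator `s_i` (for `1 ≤ i ≤ n-1`) on an
arbitrary signed permutation: `s_i ⋆ u = s_i·u` if the value `i` occurs strictly to the left
of the value `i+1` in the unfolding of `u`, and `u` otherwise. -/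
def demStep (n i : ℕ) (u : Perm ℤ) : Perm ℤ :=
  if dkey n (u⁻¹ (i : ℤ)) < dkey n (u⁻¹ ((i : ℤ) + 1)) then sgen n i * u else u

/-- The letterwise extended Demazure action of a word:
`(s_{a₁} ⋯ s_{a_k}) ⋆ u = s_{a₁} ⋆ (s_{a₂} ⋆ (⋯ (s_{a_k} ⋆ u)))`. -/
def demWord (n : ℕ) (l : List ℕ) (u : Perm ℤ) : Perm ℤ := l.foldr (demStep n) u

/-- A member of the symmetric group on `±[n]`, viewed as a permutation of `ℤ`:
it fixes `0` and everything of absolute value `> n`. -/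
def IsPermPM (n : ℕ) (w : Perm ℤ) : Prop := ∀ a : ℤ, a = 0 ∨ (n : ℤ) < |a| → w a = a

/-- The simple generators of the symmetric group on `±[n]` (type `A_{2n-1}`):
`agen n k` (for `1 ≤ k ≤ 2n-1`) transposes the order-adjacent elements of `±[n]`
with keys `k` and `k+1`. -/
def agen (n k : ℕ) : Perm ℤ := Equiv.swap (ofKey n (k : ℤ)) (ofKey n ((k : ℤ) + 1))

/-- The Coxeter length of an element of the symmetric group on `±[n]`. -/
noncomputable def ALength (n : ℕ) (w : Perm ℤ) : ℕ :=
  sInf {k | ∃ l : List ℕ, (∀ i ∈ l, 1 ≤ i ∧ i ≤ 2 * n - 1) ∧ l.length = k ∧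
    (l.map (agen n)).prod = w}

/-- `dem` is the Demazure product of the symmetric group on `±[n]`, viewed as a Coxeter
group of type `A_{2n-1}` with simple generators the transpositions of order-adjacent
elements of `±[n]`. -/
def IsDemazureA (n : ℕ) (dem : Perm ℤ → Perm ℤ → Perm ℤ) : Prop :=
  (∀ u v, IsPermPM n u → IsPermPM n v → IsPermPM n (dem u v)) ∧
  (∀ u v w, IsPermPM n u → IsPermPM n v → IsPermPM n w →
      dem (dem u v) w = dem u (dem v w)) ∧
  (∀ u, IsPermPM n u → dem 1 u = u ∧ dem u 1 = u) ∧
  (∀ k, 1 ≤ k → k ≤ 2 * n - 1 → ∀ u, IsPermPM n u →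
      (ALength n u < ALength n (agen n k * u) → dem (agen n k) u = agen n k * u) ∧
      (ALength n (agen n k * u) < ALength n u → dem (agen n k) u = u))

-- AUX START
lemma inPM4 (a : ℤ) : inPM 4 a ↔ a ≠ 0 ∧ -4 ≤ a ∧ a ≤ 4 := by
  simp [inPM, abs_le]

lemma notPM_cases {a : ℤ} (h : ¬ inPM 4 a) : a = 0 ∨ a < -4 ∨ 4 < a := by
  by_contra hc
  push_neg at hc
  exact h ((inPM4 a).mpr ⟨hc.1, by omega, by omega⟩)

lemma notPM_of (a : ℤ) (h : a = 0 ∨ a < -4 ∨ 4 < a) : ¬ inPM 4 a := by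
  intro hpm
  rw [inPM4] at hpm
  omega

lemma dkey_ofKey {k : ℤ} (h1 : 1 ≤ k) (h2 : k ≤ 8) : dkey 4 (ofKey 4 k) = k := by
  simp only [dkey, ofKey]
  norm_num
  split_ifs <;> omega

lemma ofKey_inPM {k : ℤ} (h1 : 1 ≤ k) (h2 : k ≤ 8) : inPM 4 (ofKey 4 k) := by
  rw [inPM4]
  simp only [ofKey]
  norm_num
  split_ifs <;> omega

lemma dkey_neg {a : ℤ} (h : inPM 4 a) : dkey 4 (-a) = 9 - dkey 4 a := by
  rw [inPM4] at h
  simp only [dkey]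
  norm_num
  split_ifs <;> omega

lemma dkey_inj {a b : ℤ} (ha : inPM 4 a) (hb : inPM 4 b) (h : dkey 4 a = dkey 4 b) :
    a = b := by
  rw [inPM4] at ha hb
  simp only [dkey] at h
  norm_num at h
  split_ifs at h <;> omega

lemma pres_of_fix (x : Perm ℤ) (hfix : ∀ a : ℤ, ¬ inPM 4 a → x a = a) :
    ∀ a : ℤ, inPM 4 a → inPM 4 (x a) := by
  intro a ha
  by_contra hc
  have h1 : x (x a) = x a := hfix _ hc
  have h2 : x a = a := x.injective h1
  rw [h2] at hc
  exact hc ha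

lemma permExt {x y : Perm ℤ} (hx : ∀ a : ℤ, ¬ inPM 4 a → x a = a)
    (hy : ∀ a : ℤ, ¬ inPM 4 a → y a = a)
    (h : ∀ a ∈ Finset.Icc (-4 : ℤ) 4, x a = y a) : x = y := by
  apply Equiv.ext
  intro a
  by_cases hpm : inPM 4 a
  · rw [inPM4] at hpm
    exact h a (Finset.mem_Icc.mpr ⟨hpm.2.1, hpm.2.2⟩)
  · rw [hx _ hpm, hy _ hpm]
-- AUX1 END
-- AUX2: generators
lemma sgen_fix {i : ℕ} (h1 : 1 ≤ i) (h2 : i ≤ 4) {a : ℤ} (ha : ¬ inPM 4 a) :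
    sgen 4 i a = a := by
  have ha' := notPM_cases ha
  interval_cases i <;>
    (simp only [sgen, Perm.mul_apply]; norm_num;
     simp only [swap_apply_def]; split_ifs <;> first | (exfalso; assumption) | omega)

lemma sgen_neg {i : ℕ} (h1 : 1 ≤ i) (h2 : i ≤ 4) (a : ℤ) :
    sgen 4 i (-a) = -(sgen 4 i a) := by
  interval_cases i <;>
    (simp only [sgen, Perm.mul_apply]; norm_num;
     simp only [swap_apply_def]; split_ifs <;> first | (exfalso; assumption) | omega)

lemma agen_fix {k : ℕ} (h1 : 1 ≤ k) (h2 : k ≤ 7) {a : ℤ} (ha : ¬ inPM 4 a) :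
    agen 4 k a = a := by
  have ha' := notPM_cases ha
  interval_cases k <;>
    (simp only [agen, ofKey]; norm_num;
     simp only [swap_apply_def]; split_ifs <;> first | (exfalso; assumption) | omega)
-- AUX3: words
lemma wordProd_cons (i : ℕ) (l : List ℕ) :
    wordProd 4 (i :: l) = sgen 4 i * wordProd 4 l := by
  simp [wordProd]

lemma wordProd_fix {l : List ℕ} (hl : ∀ j ∈ l, 1 ≤ j ∧ j ≤ 4) {a : ℤ}
    (ha : ¬ inPM 4 a) : wordProd 4 l a = a := by
  induction l with
  | nil => rfl
  | cons i t ih =>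
    have hi := hl i (by simp)
    rw [wordProd_cons, Perm.mul_apply, ih (fun j hj => hl j (by simp [hj]))]
    exact sgen_fix hi.1 hi.2 ha

lemma wordProd_neg {l : List ℕ} (hl : ∀ j ∈ l, 1 ≤ j ∧ j ≤ 4) (a : ℤ) :
    wordProd 4 l (-a) = -(wordProd 4 l a) := by
  induction l with
  | nil => rfl
  | cons i t ih =>
    have hi := hl i (by simp)
    rw [wordProd_cons, Perm.mul_apply, Perm.mul_apply,
      ih (fun j hj => hl j (by simp [hj]))]
    exact sgen_neg hi.1 hi.2 _

def aprod (l : List ℕ) : Perm ℤ := (l.map (agen 4)).prod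

lemma aprod_cons (k : ℕ) (l : List ℕ) : aprod (k :: l) = agen 4 k * aprod l := by
  simp [aprod]

lemma aprod_fix {l : List ℕ} (hl : ∀ j ∈ l, 1 ≤ j ∧ j ≤ 7) {a : ℤ}
    (ha : ¬ inPM 4 a) : aprod l a = a := by
  induction l with
  | nil => rfl
  | cons k t ih =>
    have hk := hl k (by simp)
    rw [aprod_cons, Perm.mul_apply, ih (fun j hj => hl j (by simp [hj]))]
    exact agen_fix hk.1 hk.2 ha

lemma wordProd_signed {l : List ℕ} (hl : ∀ j ∈ l, 1 ≤ j ∧ j ≤ 4) :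
    IsSignedPerm 4 (wordProd 4 l) := by
  refine ⟨wordProd_neg hl, fun a ha => wordProd_fix hl ?_⟩
  apply notPM_of
  rcases lt_abs.mp ha with h | h
  · right; right; norm_num at h ⊢; omega
  · right; left; omega

lemma aprod_permPM {l : List ℕ} (hl : ∀ j ∈ l, 1 ≤ j ∧ j ≤ 7) :
    IsPermPM 4 (aprod l) := by
  intro a ha
  apply aprod_fix hl
  apply notPM_of
  rcases ha with h | h
  · left; exact h
  · rcases lt_abs.mp h with h' | h'
    · right; right; norm_num at h' ⊢; omega
    · right; left; omega
-- AUX4: inversion counts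
noncomputable def pairsA : Finset (ℤ × ℤ) :=
  ((Finset.Icc 1 8) ×ˢ (Finset.Icc 1 8)).filter fun pq => pq.1 < pq.2

noncomputable def pairsD : Finset (ℤ × ℤ) := pairsA.filter fun pq => pq.1 + pq.2 ≠ 9

def cnt (P : Finset (ℤ × ℤ)) (u : Perm ℤ) : ℕ :=
  (P.filter fun pq => dkey 4 (u (ofKey 4 pq.2)) < dkey 4 (u (ofKey 4 pq.1))).card

lemma pairsA_spec : ∀ pq ∈ pairsA, 1 ≤ pq.1 ∧ pq.1 < pq.2 ∧ pq.2 ≤ 8 := by decide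

lemma pairsD_spec : ∀ pq ∈ pairsD, 1 ≤ pq.1 ∧ pq.1 < pq.2 ∧ pq.2 ≤ 8 ∧ pq.1 + pq.2 ≠ 9 := by
  decide

lemma swap_order {a b X Y : ℤ} (ha : inPM 4 a) (hb : inPM 4 b)
    (hab : dkey 4 b = dkey 4 a + 1) (hX : inPM 4 X) (hY : inPM 4 Y)
    (h : dkey 4 (swap a b Y) < dkey 4 (swap a b X)) :
    dkey 4 Y < dkey 4 X ∨ (X = a ∧ Y = b) ∨ (X = b ∧ Y = a) := by
  by_cases hXa : X = a
  · rw [hXa, swap_apply_left] at h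
    by_cases hYb : Y = b
    · exact Or.inr (Or.inl ⟨hXa, hYb⟩)
    · by_cases hYa : Y = a
      · rw [hYa, swap_apply_left] at h; omega
      · rw [swap_apply_of_ne_of_ne hYa hYb] at h
        have h1 : dkey 4 Y ≠ dkey 4 a := fun he => hYa (dkey_inj hY ha he)
        have h2 : dkey 4 Y ≠ dkey 4 b := fun he => hYb (dkey_inj hY hb he)
        left; rw [hXa]; omega
  · by_cases hXb : X = b
    · rw [hXb, swap_apply_right] at h
      by_cases hYa : Y = a
      · exact Or.inr (Or.inr ⟨hXb, hYa⟩)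
      · by_cases hYb : Y = b
        · rw [hYb, swap_apply_right] at h; omega
        · rw [swap_apply_of_ne_of_ne hYa hYb] at h
          left; rw [hXb]; omega
    · rw [swap_apply_of_ne_of_ne hXa hXb] at h
      by_cases hYa : Y = a
      · rw [hYa, swap_apply_left] at h; left; rw [hYa]; omega
      · by_cases hYb : Y = b
        · rw [hYb, swap_apply_right] at h
          have h1 : dkey 4 X ≠ dkey 4 b := fun he => hXb (dkey_inj hX hb he)
          left; rw [hYb]; omega
        · rw [swap_apply_of_ne_of_ne hYa hYb] at h; left; exact h

lemma cnt_swap_le (P : Finset (ℤ × ℤ))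
    (hP : ∀ pq ∈ P, 1 ≤ pq.1 ∧ pq.1 < pq.2 ∧ pq.2 ≤ 8)
    (u : Perm ℤ) (hu : ∀ c : ℤ, inPM 4 c → inPM 4 (u c))
    {a b : ℤ} (ha : inPM 4 a) (hb : inPM 4 b) (hab : dkey 4 b = dkey 4 a + 1) :
    cnt P (swap a b * u) ≤ cnt P u + 1 := by
  classical
  set pa := dkey 4 (u.symm a) with hpa_def
  set pb := dkey 4 (u.symm b) with hpb_def
  have hsub : (P.filter fun pq =>
        dkey 4 ((swap a b * u) (ofKey 4 pq.2)) < dkey 4 ((swap a b * u) (ofKey 4 pq.1)))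
      ⊆ insert (min pa pb, max pa pb)
        (P.filter fun pq => dkey 4 (u (ofKey 4 pq.2)) < dkey 4 (u (ofKey 4 pq.1))) := by
    rintro ⟨p, q⟩ hm
    rw [Finset.mem_filter] at hm
    obtain ⟨hPm, hinv⟩ := hm
    obtain ⟨hp1, hpq, hq8⟩ := hP _ hPm
    have hXpm : inPM 4 (u (ofKey 4 p)) := hu _ (ofKey_inPM (by omega) (by omega))
    have hYpm : inPM 4 (u (ofKey 4 q)) := hu _ (ofKey_inPM (by omega) (by omega))
    simp only [Perm.mul_apply] at hinv
    rcases swap_order ha hb hab hXpm hYpm hinv with h | ⟨h1, h2⟩ | ⟨h1, h2⟩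
    · exact Finset.mem_insert_of_mem (Finset.mem_filter.mpr ⟨hPm, h⟩)
    · have e1 : pa = p := by
        rw [hpa_def, show u.symm a = ofKey 4 p by rw [← h1, Equiv.symm_apply_apply],
          dkey_ofKey (by omega) (by omega)]
      have e2 : pb = q := by
        rw [hpb_def, show u.symm b = ofKey 4 q by rw [← h2, Equiv.symm_apply_apply],
          dkey_ofKey (by omega) (by omega)]
      rw [Finset.mem_insert]
      left
      rw [Prod.mk.injEq]
      constructor <;> omega
    · have e1 : pb = p := by
        rw [hpb_def, show u.symm b = ofKey 4 p by rw [← h1, Equiv.symm_apply_apply],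
          dkey_ofKey (by omega) (by omega)]
      have e2 : pa = q := by
        rw [hpa_def, show u.symm a = ofKey 4 q by rw [← h2, Equiv.symm_apply_apply],
          dkey_ofKey (by omega) (by omega)]
      rw [Finset.mem_insert]
      left
      rw [Prod.mk.injEq]
      constructor <;> omega
  calc cnt P (swap a b * u) ≤ (insert (min pa pb, max pa pb)
      (P.filter fun pq => dkey 4 (u (ofKey 4 pq.2)) < dkey 4 (u (ofKey 4 pq.1)))).card :=
        Finset.card_le_card hsub
    _ ≤ cnt P u + 1 := Finset.card_insert_le _ _
-- AUX5: the special s_4 lemma and step bounds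
lemma sgen4_order : ∀ X ∈ Finset.Icc (-4 : ℤ) 4, ∀ Y ∈ Finset.Icc (-4 : ℤ) 4,
    X ≠ 0 → Y ≠ 0 → dkey 4 (sgen 4 4 Y) < dkey 4 (sgen 4 4 X) →
    dkey 4 Y < dkey 4 X ∨ (X = 3 ∧ Y = -4) ∨ (X = -4 ∧ Y = 3) ∨
      (X = 4 ∧ Y = -3) ∨ (X = -3 ∧ Y = 4) ∨ Y = -X := by decide

lemma mem_Icc_of_inPM {a : ℤ} (h : inPM 4 a) : a ∈ Finset.Icc (-4 : ℤ) 4 := by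
  rw [inPM4] at h
  exact Finset.mem_Icc.mpr ⟨h.2.1, h.2.2⟩

lemma cnt_sgen4_le (P : Finset (ℤ × ℤ))
    (hP : ∀ pq ∈ P, 1 ≤ pq.1 ∧ pq.1 < pq.2 ∧ pq.2 ≤ 8 ∧ pq.1 + pq.2 ≠ 9)
    (x : Perm ℤ) (hu : ∀ c : ℤ, inPM 4 c → inPM 4 (x c))
    (hsx : ∀ c : ℤ, x (-c) = -(x c)) :
    cnt P (sgen 4 4 * x) ≤ cnt P x + 2 := by
  classical
  set p3 := dkey 4 (x.symm 3) with hp3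
  set q3 := dkey 4 (x.symm (-4)) with hq3
  set p4 := dkey 4 (x.symm 4) with hp4
  set q4 := dkey 4 (x.symm (-3)) with hq4
  set S := P.filter fun pq => dkey 4 (x (ofKey 4 pq.2)) < dkey 4 (x (ofKey 4 pq.1)) with hS
  have hsub : (P.filter fun pq =>
        dkey 4 ((sgen 4 4 * x) (ofKey 4 pq.2)) < dkey 4 ((sgen 4 4 * x) (ofKey 4 pq.1)))
      ⊆ insert (min p3 q3, max p3 q3) (insert (min p4 q4, max p4 q4) S) := by
    rintro ⟨p, q⟩ hm
    rw [Finset.mem_filter] at hm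
    obtain ⟨hPm, hinv⟩ := hm
    obtain ⟨hp1, hpq, hq8, hdiag⟩ := hP _ hPm
    have hKp : inPM 4 (ofKey 4 p) := ofKey_inPM (by omega) (by omega)
    have hKq : inPM 4 (ofKey 4 q) := ofKey_inPM (by omega) (by omega)
    have hXpm : inPM 4 (x (ofKey 4 p)) := hu _ hKp
    have hYpm : inPM 4 (x (ofKey 4 q)) := hu _ hKq
    simp only [Perm.mul_apply] at hinv
    have key := sgen4_order _ (mem_Icc_of_inPM hXpm) _ (mem_Icc_of_inPM hYpm)
      ((inPM4 _).mp hXpm).1 ((inPM4 _).mp hYpm).1 hinv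
    have hofp : dkey 4 (ofKey 4 p) = p := dkey_ofKey (by omega) (by omega)
    have hofq : dkey 4 (ofKey 4 q) = q := dkey_ofKey (by omega) (by omega)
    rcases key with h | ⟨h1, h2⟩ | ⟨h1, h2⟩ | ⟨h1, h2⟩ | ⟨h1, h2⟩ | h
    · exact Finset.mem_insert_of_mem (Finset.mem_insert_of_mem
        (Finset.mem_filter.mpr ⟨hPm, h⟩))
    · -- X = 3, Y = -4 : (p,q) = E1
      have e1 : p3 = p := by
        rw [hp3, show x.symm 3 = ofKey 4 p by rw [← h1, Equiv.symm_apply_apply], hofp]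
      have e2 : q3 = q := by
        rw [hq3, show x.symm (-4) = ofKey 4 q by rw [← h2, Equiv.symm_apply_apply], hofq]
      rw [Finset.mem_insert]
      left; rw [Prod.mk.injEq]; constructor <;> omega
    · have e1 : q3 = p := by
        rw [hq3, show x.symm (-4) = ofKey 4 p by rw [← h1, Equiv.symm_apply_apply], hofp]
      have e2 : p3 = q := by
        rw [hp3, show x.symm 3 = ofKey 4 q by rw [← h2, Equiv.symm_apply_apply], hofq]
      rw [Finset.mem_insert]
      left; rw [Prod.mk.injEq]; constructor <;> omega
    · have e1 : p4 = p := by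
        rw [hp4, show x.symm 4 = ofKey 4 p by rw [← h1, Equiv.symm_apply_apply], hofp]
      have e2 : q4 = q := by
        rw [hq4, show x.symm (-3) = ofKey 4 q by rw [← h2, Equiv.symm_apply_apply], hofq]
      rw [Finset.mem_insert, Finset.mem_insert]
      right; left; rw [Prod.mk.injEq]; constructor <;> omega
    · have e1 : q4 = p := by
        rw [hq4, show x.symm (-3) = ofKey 4 p by rw [← h1, Equiv.symm_apply_apply], hofp]
      have e2 : p4 = q := by
        rw [hp4, show x.symm 4 = ofKey 4 q by rw [← h2, Equiv.symm_apply_apply], hofq]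
      rw [Finset.mem_insert, Finset.mem_insert]
      right; left; rw [Prod.mk.injEq]; constructor <;> omega
    · -- Y = -X : diagonal, contradiction
      exfalso
      have h1 : x (ofKey 4 q) = x (-(ofKey 4 p)) := by rw [hsx, h]
      have h2 : ofKey 4 q = -(ofKey 4 p) := x.injective h1
      have h3 : q = 9 - p := by
        rw [← hofq, h2, dkey_neg hKp, hofp]
      omega
  calc cnt P (sgen 4 4 * x)
      ≤ (insert (min p3 q3, max p3 q3) (insert (min p4 q4, max p4 q4) S)).card :=
        Finset.card_le_card hsub
    _ ≤ (insert (min p4 q4, max p4 q4) S).card + 1 := Finset.card_insert_le _ _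
    _ ≤ cnt P x + 2 := by
        have h1 := Finset.card_insert_le (min p4 q4, max p4 q4) S
        have h2 : cnt P x = S.card := rfl
        omega
-- AUX6: step bounds per generator
lemma pres_swap {a b : ℤ} (ha : inPM 4 a) (hb : inPM 4 b) (u : Perm ℤ)
    (hu : ∀ c : ℤ, inPM 4 c → inPM 4 (u c)) :
    ∀ c : ℤ, inPM 4 c → inPM 4 ((swap a b * u) c) := by
  intro c hc
  simp only [Perm.mul_apply]
  by_cases h1 : u c = a
  · rw [h1, swap_apply_left]; exact hb
  · by_cases h2 : u c = b
    · rw [h2, swap_apply_right]; exact ha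
    · rw [swap_apply_of_ne_of_ne h1 h2]; exact hu c hc

lemma pairsD_spec' : ∀ pq ∈ pairsD, 1 ≤ pq.1 ∧ pq.1 < pq.2 ∧ pq.2 ≤ 8 :=
  fun pq h => ⟨(pairsD_spec pq h).1, (pairsD_spec pq h).2.1, (pairsD_spec pq h).2.2.1⟩

lemma cntD_step {i : ℕ} (h1 : 1 ≤ i) (h2 : i ≤ 4) (x : Perm ℤ)
    (hu : ∀ c : ℤ, inPM 4 c → inPM 4 (x c)) (hsx : ∀ c : ℤ, x (-c) = -(x c)) :
    cnt pairsD (sgen 4 i * x) ≤ cnt pairsD x + 2 := by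
  have step2 : ∀ (a b a' b' : ℤ), inPM 4 a → inPM 4 b → inPM 4 a' → inPM 4 b' →
      dkey 4 b = dkey 4 a + 1 → dkey 4 b' = dkey 4 a' + 1 →
      cnt pairsD (swap a b * (swap a' b' * x)) ≤ cnt pairsD x + 2 := by
    intro a b a' b' ha hb ha' hb' hab hab'
    have m1 := cnt_swap_le pairsD pairsD_spec' (swap a' b' * x)
      (pres_swap ha' hb' x hu) ha hb hab
    have m2 := cnt_swap_le pairsD pairsD_spec' x hu ha' hb' hab'
    omega
  interval_cases i
  · have hform : sgen 4 1 = swap (1:ℤ) 2 * (swap (-2:ℤ) (-1)) := by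
      simp only [sgen]
      norm_num
      rw [Equiv.swap_comm]
    rw [hform, mul_assoc]
    exact step2 1 2 (-2) (-1) (by decide) (by decide) (by decide) (by decide)
      (by decide) (by decide)
  · have hform : sgen 4 2 = swap (2:ℤ) 3 * (swap (-3:ℤ) (-2)) := by
      simp only [sgen]
      norm_num
      rw [Equiv.swap_comm]
    rw [hform, mul_assoc]
    exact step2 2 3 (-3) (-2) (by decide) (by decide) (by decide) (by decide)
      (by decide) (by decide)
  · have hform : sgen 4 3 = swap (3:ℤ) 4 * (swap (-4:ℤ) (-3)) := by
      simp only [sgen]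
      norm_num
      rw [Equiv.swap_comm]
    rw [hform, mul_assoc]
    exact step2 3 4 (-4) (-3) (by decide) (by decide) (by decide) (by decide)
      (by decide) (by decide)
  · exact cnt_sgen4_le pairsD pairsD_spec x hu hsx

lemma cntA_step {k : ℕ} (h1 : 1 ≤ k) (h2 : k ≤ 7) (x : Perm ℤ)
    (hu : ∀ c : ℤ, inPM 4 c → inPM 4 (x c)) :
    cnt pairsA (agen 4 k * x) ≤ cnt pairsA x + 1 := by
  interval_cases k
  · have hform : agen 4 1 = swap (1:ℤ) 2 := by simp only [agen, ofKey]; norm_num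
    rw [hform]
    exact cnt_swap_le pairsA pairsA_spec x hu (by decide) (by decide) (by decide)
  · have hform : agen 4 2 = swap (2:ℤ) 3 := by simp only [agen, ofKey]; norm_num
    rw [hform]
    exact cnt_swap_le pairsA pairsA_spec x hu (by decide) (by decide) (by decide)
  · have hform : agen 4 3 = swap (3:ℤ) 4 := by simp only [agen, ofKey]; norm_num
    rw [hform]
    exact cnt_swap_le pairsA pairsA_spec x hu (by decide) (by decide) (by decide)
  · have hform : agen 4 4 = swap (4:ℤ) (-4) := by simp only [agen, ofKey]; norm_num
    rw [hform]
    exact cnt_swap_le pairsA pairsA_spec x hu (by decide) (by decide) (by decide)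
  · have hform : agen 4 5 = swap (-4:ℤ) (-3) := by simp only [agen, ofKey]; norm_num
    rw [hform]
    exact cnt_swap_le pairsA pairsA_spec x hu (by decide) (by decide) (by decide)
  · have hform : agen 4 6 = swap (-3:ℤ) (-2) := by simp only [agen, ofKey]; norm_num
    rw [hform]
    exact cnt_swap_le pairsA pairsA_spec x hu (by decide) (by decide) (by decide)
  · have hform : agen 4 7 = swap (-2:ℤ) (-1) := by simp only [agen, ofKey]; norm_num
    rw [hform]
    exact cnt_swap_le pairsA pairsA_spec x hu (by decide) (by decide) (by decide)
-- AUX7: word bounds and length comparisons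
lemma cntD_word : ∀ (l : List ℕ), (∀ j ∈ l, 1 ≤ j ∧ j ≤ 4) →
    cnt pairsD (wordProd 4 l) ≤ 2 * l.length := by
  intro l
  induction l with
  | nil =>
    intro _
    have h0 : cnt pairsD (wordProd 4 []) = 0 := by decide
    simp [h0]
  | cons i t ih =>
    intro hl
    have hi := hl i (by simp)
    have ht : ∀ j ∈ t, 1 ≤ j ∧ j ≤ 4 := fun j hj => hl j (by simp [hj])
    rw [wordProd_cons]
    have hstep := cntD_step hi.1 hi.2 (wordProd 4 t)
      (pres_of_fix _ (fun a ha => wordProd_fix ht ha)) (wordProd_neg ht)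
    have := ih ht
    simp only [List.length_cons]
    omega

lemma cntA_word : ∀ (l : List ℕ), (∀ j ∈ l, 1 ≤ j ∧ j ≤ 7) →
    cnt pairsA (aprod l) ≤ l.length := by
  intro l
  induction l with
  | nil =>
    intro _
    have h0 : cnt pairsA (aprod []) = 0 := by decide
    simp [h0]
  | cons k t ih =>
    intro hl
    have hk := hl k (by simp)
    have ht : ∀ j ∈ t, 1 ≤ j ∧ j ≤ 7 := fun j hj => hl j (by simp [hj])
    rw [aprod_cons]
    have hstep := cntA_step hk.1 hk.2 (aprod t)
      (pres_of_fix _ (fun a ha => aprod_fix ht ha))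
    have := ih ht
    simp only [List.length_cons]
    omega

lemma DLength_le {L : List ℕ} (hL : ∀ j ∈ L, 1 ≤ j ∧ j ≤ 4) :
    DLength 4 (wordProd 4 L) ≤ L.length :=
  Nat.sInf_le ⟨L, hL, rfl, rfl⟩

lemma cntD_le_DLength {u : Perm ℤ} {L : List ℕ} (hL : ∀ j ∈ L, 1 ≤ j ∧ j ≤ 4)
    (hu : wordProd 4 L = u) : cnt pairsD u ≤ 2 * DLength 4 u := by
  have hne : {k | ∃ l : List ℕ, (∀ i ∈ l, 1 ≤ i ∧ i ≤ 4) ∧ l.length = k ∧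
      wordProd 4 l = u}.Nonempty := ⟨L.length, L, hL, rfl, hu⟩
  obtain ⟨l', hv', hlen, hprod⟩ := Nat.sInf_mem hne
  calc cnt pairsD u = cnt pairsD (wordProd 4 l') := by rw [hprod]
    _ ≤ 2 * l'.length := cntD_word l' hv'
    _ = 2 * DLength 4 u := by rw [hlen]; rfl

lemma ALength_le {L : List ℕ} (hL : ∀ j ∈ L, 1 ≤ j ∧ j ≤ 7) :
    ALength 4 (aprod L) ≤ L.length :=
  Nat.sInf_le ⟨L, fun i hi => ⟨(hL i hi).1, by have := (hL i hi).2; omega⟩, rfl, rfl⟩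

lemma cntA_le_ALength {u : Perm ℤ} {L : List ℕ} (hL : ∀ j ∈ L, 1 ≤ j ∧ j ≤ 7)
    (hu : aprod L = u) : cnt pairsA u ≤ ALength 4 u := by
  have hne : {k | ∃ l : List ℕ, (∀ i ∈ l, 1 ≤ i ∧ i ≤ 2 * 4 - 1) ∧ l.length = k ∧
      (l.map (agen 4)).prod = u}.Nonempty :=
    ⟨L.length, L, fun i hi => ⟨(hL i hi).1, by have := (hL i hi).2; omega⟩, rfl, hu⟩
  obtain ⟨l', hv', hlen, hprod⟩ := Nat.sInf_mem hne
  calc cnt pairsA u = cnt pairsA (aprod l') := by rw [show aprod l' = u from hprod]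
    _ ≤ l'.length := cntA_word l' (fun i hi => ⟨(hv' i hi).1, by have := (hv' i hi).2; omega⟩)
    _ = ALength 4 u := by rw [hlen]; rfl

lemma D_asc {i : ℕ} (hi1 : 1 ≤ i) (hi2 : i ≤ 4) {L : List ℕ}
    (hL : ∀ j ∈ L, 1 ≤ j ∧ j ≤ 4)
    (hc : cnt pairsD (wordProd 4 (i :: L)) = 2 * L.length + 2) :
    DLength 4 (wordProd 4 L) < DLength 4 (sgen 4 i * wordProd 4 L) := by
  have hcons : ∀ j ∈ i :: L, 1 ≤ j ∧ j ≤ 4 := by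
    intro j hj
    rcases List.mem_cons.mp hj with h | h
    · rw [h]; exact ⟨hi1, hi2⟩
    · exact hL j h
  have h1 : DLength 4 (wordProd 4 L) ≤ L.length := DLength_le hL
  have h2 := cntD_le_DLength hcons rfl
  rw [← wordProd_cons]
  omega

lemma D_desc {i : ℕ} {L L' : List ℕ} (hL : ∀ j ∈ L, 1 ≤ j ∧ j ≤ 4)
    (hL' : ∀ j ∈ L', 1 ≤ j ∧ j ≤ 4)
    (hprod : wordProd 4 L' = wordProd 4 (i :: L))
    (hc : cnt pairsD (wordProd 4 L) = 2 * L'.length + 2) :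
    DLength 4 (sgen 4 i * wordProd 4 L) < DLength 4 (wordProd 4 L) := by
  have h1 : DLength 4 (wordProd 4 L') ≤ L'.length := DLength_le hL'
  rw [hprod] at h1
  have h2 := cntD_le_DLength hL rfl
  rw [← wordProd_cons]
  omega

lemma A_asc {k : ℕ} (hk1 : 1 ≤ k) (hk2 : k ≤ 7) {L : List ℕ}
    (hL : ∀ j ∈ L, 1 ≤ j ∧ j ≤ 7)
    (hc : cnt pairsA (aprod (k :: L)) = L.length + 1) :
    ALength 4 (aprod L) < ALength 4 (agen 4 k * aprod L) := by
  have hcons : ∀ j ∈ k :: L, 1 ≤ j ∧ j ≤ 7 := by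
    intro j hj
    rcases List.mem_cons.mp hj with h | h
    · rw [h]; exact ⟨hk1, hk2⟩
    · exact hL j h
  have h1 : ALength 4 (aprod L) ≤ L.length := ALength_le hL
  have h2 := cntA_le_ALength hcons rfl
  rw [← aprod_cons]
  omega

lemma A_desc {k : ℕ} {L L' : List ℕ} (hL : ∀ j ∈ L, 1 ≤ j ∧ j ≤ 7)
    (hL' : ∀ j ∈ L', 1 ≤ j ∧ j ≤ 7)
    (hprod : aprod L' = aprod (k :: L))
    (hc : cnt pairsA (aprod L) = L'.length + 1) :
    ALength 4 (agen 4 k * aprod L) < ALength 4 (aprod L) := by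
  have h1 : ALength 4 (aprod L') ≤ L'.length := ALength_le hL'
  rw [hprod] at h1
  have h2 := cntA_le_ALength hL rfl
  rw [← aprod_cons]
  omega
-- AUX8: Demazure step lemmas
lemma evenWord {L : List ℕ} (hL : ∀ j ∈ L, 1 ≤ j ∧ j ≤ 4)
    (h : Even (((Finset.Icc (1 : ℤ) 4).filter fun j => wordProd 4 L j < 0).card)) :
    IsEvenSignedPerm 4 (wordProd 4 L) :=
  ⟨wordProd_signed hL, h⟩

lemma sgen_evenSigned {i : ℕ} (hi1 : 1 ≤ i) (hi2 : i ≤ 4) :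
    IsEvenSignedPerm 4 (sgen 4 i) := by
  constructor
  · refine ⟨sgen_neg hi1 hi2, fun a ha => sgen_fix hi1 hi2 (notPM_of _ ?_)⟩
    rcases lt_abs.mp ha with h | h
    · right; right; norm_num at h ⊢; omega
    · right; left; norm_num at h ⊢; omega
  · interval_cases i <;> decide

lemma demD_asc (dem : Perm ℤ → Perm ℤ → Perm ℤ) (hdem : IsDemazure 4 dem)
    {i : ℕ} (hi1 : 1 ≤ i) (hi2 : i ≤ 4) {L : List ℕ}
    (hL : ∀ j ∈ L, 1 ≤ j ∧ j ≤ 4)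
    (hEv : Even (((Finset.Icc (1 : ℤ) 4).filter fun j => wordProd 4 L j < 0).card))
    (hc : cnt pairsD (wordProd 4 (i :: L)) = 2 * L.length + 2) :
    dem (sgen 4 i) (wordProd 4 L) = wordProd 4 (i :: L) := by
  have h := (hdem.2.2.2 i hi1 hi2 (wordProd 4 L) (evenWord hL hEv)).1
    (D_asc hi1 hi2 hL hc)
  rw [h, wordProd_cons]

lemma demD_desc (dem : Perm ℤ → Perm ℤ → Perm ℤ) (hdem : IsDemazure 4 dem)
    {i : ℕ} (hi1 : 1 ≤ i) (hi2 : i ≤ 4) {L L' : List ℕ}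
    (hL : ∀ j ∈ L, 1 ≤ j ∧ j ≤ 4) (hL' : ∀ j ∈ L', 1 ≤ j ∧ j ≤ 4)
    (hEv : Even (((Finset.Icc (1 : ℤ) 4).filter fun j => wordProd 4 L j < 0).card))
    (hprod : wordProd 4 L' = wordProd 4 (i :: L))
    (hc : cnt pairsD (wordProd 4 L) = 2 * L'.length + 2) :
    dem (sgen 4 i) (wordProd 4 L) = wordProd 4 L :=
  (hdem.2.2.2 i hi1 hi2 (wordProd 4 L) (evenWord hL hEv)).2 (D_desc hL hL' hprod hc)

lemma demD_peel (dem : Perm ℤ → Perm ℤ → Perm ℤ) (hdem : IsDemazure 4 dem)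
    {i : ℕ} (hi1 : 1 ≤ i) (hi2 : i ≤ 4) {L : List ℕ}
    (hL : ∀ j ∈ L, 1 ≤ j ∧ j ≤ 4)
    (hEv : Even (((Finset.Icc (1 : ℤ) 4).filter fun j => wordProd 4 L j < 0).card))
    (hc : cnt pairsD (wordProd 4 (i :: L)) = 2 * L.length + 2)
    {V : Perm ℤ} (hV : IsEvenSignedPerm 4 V) :
    dem (wordProd 4 (i :: L)) V = dem (sgen 4 i) (dem (wordProd 4 L) V) := by
  rw [← demD_asc dem hdem hi1 hi2 hL hEv hc]
  exact hdem.2.1 _ _ _ (sgen_evenSigned hi1 hi2) (evenWord hL hEv) hV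

lemma agen_permPM {k : ℕ} (hk1 : 1 ≤ k) (hk2 : k ≤ 7) : IsPermPM 4 (agen 4 k) := by
  have h : agen 4 k = aprod [k] := by simp [aprod]
  rw [h]
  exact aprod_permPM (by simpa using ⟨hk1, hk2⟩)

lemma demA_asc (dem : Perm ℤ → Perm ℤ → Perm ℤ) (hdem : IsDemazureA 4 dem)
    {k : ℕ} (hk1 : 1 ≤ k) (hk2 : k ≤ 7) {L : List ℕ}
    (hL : ∀ j ∈ L, 1 ≤ j ∧ j ≤ 7)
    (hc : cnt pairsA (aprod (k :: L)) = L.length + 1) :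
    dem (agen 4 k) (aprod L) = aprod (k :: L) := by
  have h := (hdem.2.2.2 k hk1 (by omega) (aprod L) (aprod_permPM hL)).1
    (A_asc hk1 hk2 hL hc)
  rw [h, aprod_cons]

lemma demA_desc (dem : Perm ℤ → Perm ℤ → Perm ℤ) (hdem : IsDemazureA 4 dem)
    {k : ℕ} (hk1 : 1 ≤ k) (hk2 : k ≤ 7) {L L' : List ℕ}
    (hL : ∀ j ∈ L, 1 ≤ j ∧ j ≤ 7) (hL' : ∀ j ∈ L', 1 ≤ j ∧ j ≤ 7)
    (hprod : aprod L' = aprod (k :: L))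
    (hc : cnt pairsA (aprod L) = L'.length + 1) :
    dem (agen 4 k) (aprod L) = aprod L :=
  (hdem.2.2.2 k hk1 (by omega) (aprod L) (aprod_permPM hL)).2 (A_desc hL hL' hprod hc)

lemma demA_peel (dem : Perm ℤ → Perm ℤ → Perm ℤ) (hdem : IsDemazureA 4 dem)
    {k : ℕ} (hk1 : 1 ≤ k) (hk2 : k ≤ 7) {L : List ℕ}
    (hL : ∀ j ∈ L, 1 ≤ j ∧ j ≤ 7)
    (hc : cnt pairsA (aprod (k :: L)) = L.length + 1)
    {V : Perm ℤ} (hV : IsPermPM 4 V) :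
    dem (aprod (k :: L)) V = dem (agen 4 k) (dem (aprod L) V) := by
  rw [← demA_asc dem hdem hk1 hk2 hL hc]
  exact hdem.2.1 _ _ _ (agen_permPM hk1 hk2) (aprod_permPM hL) hV
/-- for the even signed permutations `w = [1,4,-2,-3]` and
`v = [4,-1,2,-3]` in `D_4`:
(a) the Demazure product in `D_4` is `w ⋆ v = [-2,-1,4,3]`;
(b) the Demazure product of `w` and `v` in the symmetric group on `±[4]` (type `A_7`) is
the signed permutation `u = [-2,-1,4,-3]`;
(c) `u` is not even, so `u ∉ D_4` and `u ≠ w ⋆ v`: folding does not commute with the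
Demazure product in type `D`. -/
theorem typeD_unfolding_fails
    (w v : Perm ℤ) (hw : IsEvenSignedPerm 4 w) (hv : IsEvenSignedPerm 4 v)
    (hw1 : w 1 = 1) (hw2 : w 2 = 4) (hw3 : w 3 = -2) (hw4 : w 4 = -3)
    (hv1 : v 1 = 4) (hv2 : v 2 = -1) (hv3 : v 3 = 2) (hv4 : v 4 = -3) :
    (∀ dem : Perm ℤ → Perm ℤ → Perm ℤ, IsDemazure 4 dem →
      dem w v 1 = -2 ∧ dem w v 2 = -1 ∧ dem w v 3 = 4 ∧ dem w v 4 = 3) ∧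
    (∀ demA : Perm ℤ → Perm ℤ → Perm ℤ, IsDemazureA 4 demA →
      (demA w v 1 = -2 ∧ demA w v 2 = -1 ∧ demA w v 3 = 4 ∧ demA w v 4 = -3 ∧
        ∀ a : ℤ, demA w v (-a) = -(demA w v a)) ∧
      (¬ IsEvenSignedPerm 4 (demA w v)) ∧
      (∀ dem : Perm ℤ → Perm ℤ → Perm ℤ, IsDemazure 4 dem → demA w v ≠ dem w v)) := by
  have hv0 : v 0 = 0 := by have h := hv.1.1 0; norm_num at h; omega
  have hw0 : w 0 = 0 := by have h := hw.1.1 0; norm_num at h; omega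
  have hvm1 : v (-1) = -4 := by have h := hv.1.1 1; rw [hv1] at h; norm_num at h ⊢; omega
  have hvm2 : v (-2) = 1 := by have h := hv.1.1 2; rw [hv2] at h; norm_num at h ⊢; omega
  have hvm3 : v (-3) = -2 := by have h := hv.1.1 3; rw [hv3] at h; norm_num at h ⊢; omega
  have hvm4 : v (-4) = 3 := by have h := hv.1.1 4; rw [hv4] at h; norm_num at h ⊢; omega
  have hwm1 : w (-1) = -1 := by have h := hw.1.1 1; rw [hw1] at h; norm_num at h ⊢; omega
  have hwm2 : w (-2) = -4 := by have h := hw.1.1 2; rw [hw2] at h; norm_num at h ⊢; omega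
  have hwm3 : w (-3) = 2 := by have h := hw.1.1 3; rw [hw3] at h; norm_num at h ⊢; omega
  have hwm4 : w (-4) = 3 := by have h := hw.1.1 4; rw [hw4] at h; norm_num at h ⊢; omega
  have hvfix : ∀ a : ℤ, ¬ inPM 4 a → v a = a := by
    intro a ha
    rcases notPM_cases ha with h | h | h
    · rw [h]; exact hv0
    · exact hv.1.2 a (lt_abs.mpr (Or.inr (by push_cast; omega)))
    · exact hv.1.2 a (lt_abs.mpr (Or.inl (by push_cast; omega)))
  have hwfix : ∀ a : ℤ, ¬ inPM 4 a → w a = a := by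
    intro a ha
    rcases notPM_cases ha with h | h | h
    · rw [h]; exact hw0
    · exact hw.1.2 a (lt_abs.mpr (Or.inr (by push_cast; omega)))
    · exact hw.1.2 a (lt_abs.mpr (Or.inl (by push_cast; omega)))
  have hveq : v = wordProd 4 [3,1,2,4,3,1,2] := by
    refine permExt hvfix (fun a ha => wordProd_fix (by decide) ha) ?_
    intro a ha
    rw [Finset.mem_Icc] at ha
    obtain ⟨ha1, ha2⟩ := ha
    interval_cases a <;>
      simp only [hvm1, hvm2, hvm3, hvm4, hv0, hv1, hv2, hv3, hv4] <;> decide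
  have hweq : w = wordProd 4 [3,2,4,3] := by
    refine permExt hwfix (fun a ha => wordProd_fix (by decide) ha) ?_
    intro a ha
    rw [Finset.mem_Icc] at ha
    obtain ⟨ha1, ha2⟩ := ha
    interval_cases a <;>
      simp only [hwm1, hwm2, hwm3, hwm4, hw0, hw1, hw2, hw3, hw4] <;> decide
  have hveqA : v = aprod [5,6,7,1,2,3,4,5,6,5,2,3,4,3,1,2] := by
    refine permExt hvfix (fun a ha => aprod_fix (by decide) ha) ?_
    intro a ha
    rw [Finset.mem_Icc] at ha
    obtain ⟨ha1, ha2⟩ := ha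
    interval_cases a <;>
      simp only [hvm1, hvm2, hvm3, hvm4, hv0, hv1, hv2, hv3, hv4] <;> decide
  have hweqA : w = aprod [5,6,2,3,4,5,2,3,4,3] := by
    refine permExt hwfix (fun a ha => aprod_fix (by decide) ha) ?_
    intro a ha
    rw [Finset.mem_Icc] at ha
    obtain ⟨ha1, ha2⟩ := ha
    interval_cases a <;>
      simp only [hwm1, hwm2, hwm3, hwm4, hw0, hw1, hw2, hw3, hw4] <;> decide
  have keyD : ∀ dem : Perm ℤ → Perm ℤ → Perm ℤ, IsDemazure 4 dem →
      dem w v = wordProd 4 [3,2,4,3,1,2,4,3,1,2] := by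
    intro dem hdem
    have hVE : IsEvenSignedPerm 4 (wordProd 4 [3,1,2,4,3,1,2]) := evenWord (by decide) (by decide)
    have p1 : dem (wordProd 4 [3,2,4,3]) (wordProd 4 [3,1,2,4,3,1,2]) =
        dem (sgen 4 3) (dem (wordProd 4 [2,4,3]) (wordProd 4 [3,1,2,4,3,1,2])) :=
      demD_peel dem hdem (by norm_num) (by norm_num) (by decide) (by decide) (by decide) hVE
    have p2 : dem (wordProd 4 [2,4,3]) (wordProd 4 [3,1,2,4,3,1,2]) =
        dem (sgen 4 2) (dem (wordProd 4 [4,3]) (wordProd 4 [3,1,2,4,3,1,2])) :=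
      demD_peel dem hdem (by norm_num) (by norm_num) (by decide) (by decide) (by decide) hVE
    have p3 : dem (wordProd 4 [4,3]) (wordProd 4 [3,1,2,4,3,1,2]) =
        dem (sgen 4 4) (dem (wordProd 4 [3]) (wordProd 4 [3,1,2,4,3,1,2])) :=
      demD_peel dem hdem (by norm_num) (by norm_num) (by decide) (by decide) (by decide) hVE
    have p4 : dem (wordProd 4 [3]) (wordProd 4 [3,1,2,4,3,1,2]) =
        dem (sgen 4 3) (dem (wordProd 4 []) (wordProd 4 [3,1,2,4,3,1,2])) :=
      demD_peel dem hdem (by norm_num) (by norm_num) (by decide) (by decide) (by decide) hVE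
    have p0 : dem (wordProd 4 ([] : List ℕ)) (wordProd 4 [3,1,2,4,3,1,2]) = wordProd 4 [3,1,2,4,3,1,2] := by
      rw [show wordProd 4 ([] : List ℕ) = 1 from rfl]
      exact (hdem.2.2.1 _ hVE).1
    have q1 : dem (sgen 4 3) (wordProd 4 [3,1,2,4,3,1,2]) = wordProd 4 [3,1,2,4,3,1,2] :=
      demD_desc dem hdem (L' := [1,2,4,3,1,2]) (by norm_num) (by norm_num) (by decide)
        (by decide) (by decide)
        (permExt (fun a ha => wordProd_fix (by decide) ha)
          (fun a ha => wordProd_fix (by decide) ha) (by decide))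
        (by decide)
    have q2 : dem (sgen 4 4) (wordProd 4 [3,1,2,4,3,1,2]) = wordProd 4 [4,3,1,2,4,3,1,2] :=
      demD_asc dem hdem (by norm_num) (by norm_num) (by decide) (by decide) (by decide)
    have q3 : dem (sgen 4 2) (wordProd 4 [4,3,1,2,4,3,1,2]) = wordProd 4 [2,4,3,1,2,4,3,1,2] :=
      demD_asc dem hdem (by norm_num) (by norm_num) (by decide) (by decide) (by decide)
    have q4 : dem (sgen 4 3) (wordProd 4 [2,4,3,1,2,4,3,1,2]) = wordProd 4 [3,2,4,3,1,2,4,3,1,2] :=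
      demD_asc dem hdem (by norm_num) (by norm_num) (by decide) (by decide) (by decide)
    rw [hweq, hveq, p1, p2, p3, p4, p0, q1, q2, q3, q4]
  have keyA : ∀ demA : Perm ℤ → Perm ℤ → Perm ℤ, IsDemazureA 4 demA →
      demA w v = aprod [5,6,3,5,2,3,4,5,6,7,1,2,3,4,5,6,5,2,3,4,3,1,2] := by
    intro demA hdemA
    have hVP : IsPermPM 4 (aprod [5,6,7,1,2,3,4,5,6,5,2,3,4,3,1,2]) := aprod_permPM (by decide)
    have s1 : demA (aprod [5,6,2,3,4,5,2,3,4,3]) (aprod [5,6,7,1,2,3,4,5,6,5,2,3,4,3,1,2]) =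
        demA (agen 4 5) (demA (aprod [6,2,3,4,5,2,3,4,3]) (aprod [5,6,7,1,2,3,4,5,6,5,2,3,4,3,1,2])) :=
      demA_peel demA hdemA (by norm_num) (by norm_num) (by decide) (by decide) hVP
    have s2 : demA (aprod [6,2,3,4,5,2,3,4,3]) (aprod [5,6,7,1,2,3,4,5,6,5,2,3,4,3,1,2]) =
        demA (agen 4 6) (demA (aprod [2,3,4,5,2,3,4,3]) (aprod [5,6,7,1,2,3,4,5,6,5,2,3,4,3,1,2])) :=
      demA_peel demA hdemA (by norm_num) (by norm_num) (by decide) (by decide) hVP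
    have s3 : demA (aprod [2,3,4,5,2,3,4,3]) (aprod [5,6,7,1,2,3,4,5,6,5,2,3,4,3,1,2]) =
        demA (agen 4 2) (demA (aprod [3,4,5,2,3,4,3]) (aprod [5,6,7,1,2,3,4,5,6,5,2,3,4,3,1,2])) :=
      demA_peel demA hdemA (by norm_num) (by norm_num) (by decide) (by decide) hVP
    have s4 : demA (aprod [3,4,5,2,3,4,3]) (aprod [5,6,7,1,2,3,4,5,6,5,2,3,4,3,1,2]) =
        demA (agen 4 3) (demA (aprod [4,5,2,3,4,3]) (aprod [5,6,7,1,2,3,4,5,6,5,2,3,4,3,1,2])) :=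
      demA_peel demA hdemA (by norm_num) (by norm_num) (by decide) (by decide) hVP
    have s5 : demA (aprod [4,5,2,3,4,3]) (aprod [5,6,7,1,2,3,4,5,6,5,2,3,4,3,1,2]) =
        demA (agen 4 4) (demA (aprod [5,2,3,4,3]) (aprod [5,6,7,1,2,3,4,5,6,5,2,3,4,3,1,2])) :=
      demA_peel demA hdemA (by norm_num) (by norm_num) (by decide) (by decide) hVP
    have s6 : demA (aprod [5,2,3,4,3]) (aprod [5,6,7,1,2,3,4,5,6,5,2,3,4,3,1,2]) =
        demA (agen 4 5) (demA (aprod [2,3,4,3]) (aprod [5,6,7,1,2,3,4,5,6,5,2,3,4,3,1,2])) :=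
      demA_peel demA hdemA (by norm_num) (by norm_num) (by decide) (by decide) hVP
    have s7 : demA (aprod [2,3,4,3]) (aprod [5,6,7,1,2,3,4,5,6,5,2,3,4,3,1,2]) =
        demA (agen 4 2) (demA (aprod [3,4,3]) (aprod [5,6,7,1,2,3,4,5,6,5,2,3,4,3,1,2])) :=
      demA_peel demA hdemA (by norm_num) (by norm_num) (by decide) (by decide) hVP
    have s8 : demA (aprod [3,4,3]) (aprod [5,6,7,1,2,3,4,5,6,5,2,3,4,3,1,2]) =
        demA (agen 4 3) (demA (aprod [4,3]) (aprod [5,6,7,1,2,3,4,5,6,5,2,3,4,3,1,2])) :=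
      demA_peel demA hdemA (by norm_num) (by norm_num) (by decide) (by decide) hVP
    have s9 : demA (aprod [4,3]) (aprod [5,6,7,1,2,3,4,5,6,5,2,3,4,3,1,2]) =
        demA (agen 4 4) (demA (aprod [3]) (aprod [5,6,7,1,2,3,4,5,6,5,2,3,4,3,1,2])) :=
      demA_peel demA hdemA (by norm_num) (by norm_num) (by decide) (by decide) hVP
    have s10 : demA (aprod [3]) (aprod [5,6,7,1,2,3,4,5,6,5,2,3,4,3,1,2]) =
        demA (agen 4 3) (demA (aprod []) (aprod [5,6,7,1,2,3,4,5,6,5,2,3,4,3,1,2])) :=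
      demA_peel demA hdemA (by norm_num) (by norm_num) (by decide) (by decide) hVP
    have s0 : demA (aprod ([] : List ℕ)) (aprod [5,6,7,1,2,3,4,5,6,5,2,3,4,3,1,2]) = aprod [5,6,7,1,2,3,4,5,6,5,2,3,4,3,1,2] := by
      rw [show aprod ([] : List ℕ) = 1 from rfl]
      exact (hdemA.2.2.1 _ hVP).1
    have r1 : demA (agen 4 3) (aprod [5,6,7,1,2,3,4,5,6,5,2,3,4,3,1,2]) = aprod [5,6,7,1,2,3,4,5,6,5,2,3,4,3,1,2] :=
      demA_desc demA hdemA (L' := [5,6,7,1,2,3,4,5,6,5,3,4,3,1,2]) (by norm_num) (by norm_num) (by decide) (by decide)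
        (permExt (fun a ha => aprod_fix (by decide) ha)
          (fun a ha => aprod_fix (by decide) ha) (by decide))
        (by decide)
    have r2 : demA (agen 4 4) (aprod [5,6,7,1,2,3,4,5,6,5,2,3,4,3,1,2]) = aprod [4,5,6,7,1,2,3,4,5,6,5,2,3,4,3,1,2] :=
      demA_asc demA hdemA (by norm_num) (by norm_num) (by decide) (by decide)
    have r3 : demA (agen 4 3) (aprod [4,5,6,7,1,2,3,4,5,6,5,2,3,4,3,1,2]) = aprod [3,4,5,6,7,1,2,3,4,5,6,5,2,3,4,3,1,2] :=
      demA_asc demA hdemA (by norm_num) (by norm_num) (by decide) (by decide)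
    have r4 : demA (agen 4 2) (aprod [3,4,5,6,7,1,2,3,4,5,6,5,2,3,4,3,1,2]) = aprod [2,3,4,5,6,7,1,2,3,4,5,6,5,2,3,4,3,1,2] :=
      demA_asc demA hdemA (by norm_num) (by norm_num) (by decide) (by decide)
    have r5 : demA (agen 4 5) (aprod [2,3,4,5,6,7,1,2,3,4,5,6,5,2,3,4,3,1,2]) = aprod [5,2,3,4,5,6,7,1,2,3,4,5,6,5,2,3,4,3,1,2] :=
      demA_asc demA hdemA (by norm_num) (by norm_num) (by decide) (by decide)
    have r6 : demA (agen 4 4) (aprod [5,2,3,4,5,6,7,1,2,3,4,5,6,5,2,3,4,3,1,2]) = aprod [5,2,3,4,5,6,7,1,2,3,4,5,6,5,2,3,4,3,1,2] :=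
      demA_desc demA hdemA (L' := [2,3,4,5,6,7,1,2,3,4,5,6,5,3,4,2,3,1,2]) (by norm_num) (by norm_num) (by decide) (by decide)
        (permExt (fun a ha => aprod_fix (by decide) ha)
          (fun a ha => aprod_fix (by decide) ha) (by decide))
        (by decide)
    have r7 : demA (agen 4 3) (aprod [5,2,3,4,5,6,7,1,2,3,4,5,6,5,2,3,4,3,1,2]) = aprod [3,5,2,3,4,5,6,7,1,2,3,4,5,6,5,2,3,4,3,1,2] :=
      demA_asc demA hdemA (by norm_num) (by norm_num) (by decide) (by decide)
    have r8 : demA (agen 4 2) (aprod [3,5,2,3,4,5,6,7,1,2,3,4,5,6,5,2,3,4,3,1,2]) = aprod [3,5,2,3,4,5,6,7,1,2,3,4,5,6,5,2,3,4,3,1,2] :=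
      demA_desc demA hdemA (L' := [3,4,5,6,7,1,2,3,4,5,6,5,1,2,3,4,2,3,1,2]) (by norm_num) (by norm_num) (by decide) (by decide)
        (permExt (fun a ha => aprod_fix (by decide) ha)
          (fun a ha => aprod_fix (by decide) ha) (by decide))
        (by decide)
    have r9 : demA (agen 4 6) (aprod [3,5,2,3,4,5,6,7,1,2,3,4,5,6,5,2,3,4,3,1,2]) = aprod [6,3,5,2,3,4,5,6,7,1,2,3,4,5,6,5,2,3,4,3,1,2] :=
      demA_asc demA hdemA (by norm_num) (by norm_num) (by decide) (by decide)
    have r10 : demA (agen 4 5) (aprod [6,3,5,2,3,4,5,6,7,1,2,3,4,5,6,5,2,3,4,3,1,2]) = aprod [5,6,3,5,2,3,4,5,6,7,1,2,3,4,5,6,5,2,3,4,3,1,2] :=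
      demA_asc demA hdemA (by norm_num) (by norm_num) (by decide) (by decide)
    rw [hweqA, hveqA, s1, s2, s3, s4, s5, s6, s7, s8, s9, s10, s0,
      r1, r2, r3, r4, r5, r6, r7, r8, r9, r10]
  constructor
  · intro dem hdem
    have h := keyD dem hdem
    exact ⟨by rw [h]; decide, by rw [h]; decide, by rw [h]; decide, by rw [h]; decide⟩
  · intro demA hdemA
    have hU := keyA demA hdemA
    refine ⟨⟨by rw [hU]; decide, by rw [hU]; decide, by rw [hU]; decide, by rw [hU]; decide, ?_⟩,
      ?_, ?_⟩
    · intro a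
      rw [hU]
      by_cases hpm : inPM 4 a
      · exact (by decide : ∀ b ∈ Finset.Icc (-4 : ℤ) 4,
          aprod [5,6,3,5,2,3,4,5,6,7,1,2,3,4,5,6,5,2,3,4,3,1,2] (-b) = -(aprod [5,6,3,5,2,3,4,5,6,7,1,2,3,4,5,6,5,2,3,4,3,1,2] b)) a (mem_Icc_of_inPM hpm)
      · have h1 : ¬ inPM 4 (-a) := by
          intro hc
          apply hpm
          rw [inPM4] at hc ⊢
          omega
        rw [aprod_fix (by decide) h1, aprod_fix (by decide) hpm]
    · intro hcontra
      rw [hU] at hcontra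
      exact absurd hcontra.2 (by decide)
    · intro dem hdem heq
      have hD := keyD dem hdem
      rw [hU, hD] at heq
      have h4 := congrArg (fun f : Perm ℤ => f (4 : ℤ)) heq
      exact absurd h4 (by decide)
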